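/- The conformal Lie antialgebra AK(1) is a Lie antialgebra: the superalgebra with even basis {εₙ : n ∈ ℤ} and odd basis {aᵢ : i ∈ ℤ + ½}, with products εₙ·εₘ = ε_{n+m}, εₙ·aᵢ = aᵢ·εₙ = ½a_{n+i}, aᵢ·aⱼ = ½(i−j)ε_{i+j}, satisfies the Lie antialgebra axioms (LA0)-(LA3). -/

import Mathlib

/-- The underlying space of the conformal Lie antialgebra `AK(1)`: the first component is
the coordinates of an element on the even basis `{εₙ, n ∈ ℤ}`, the second the coordinates
on the odd basis `{aᵢ, i ∈ ℤ + ½}`, where the half-integer index `i = p + ½` is encoded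
by the integer `p`. -/
abbrev AK1 : Type := (ℤ →₀ ℚ) × (ℤ →₀ ℚ)

/-- The product of `AK(1)`, the bilinear extension of `εₙ·εₘ = ε_{n+m}`,
`εₙ·aᵢ = aᵢ·εₙ = ½ a_{n+i}`, `aᵢ·aⱼ = ½(i−j) ε_{i+j}`.  In the encoding `i = p + ½`,
`j = q + ½` this reads `εₙ·a_{p+½} = ½ a_{(n+p)+½}` and
`a_{p+½}·a_{q+½} = ½(p−q) ε_{p+q+1}`. -/
noncomputable def ak1mul (u v : AK1) : AK1 :=
  (u.1.sum (fun n c => v.1.sum fun m d => Finsupp.single (n + m) (c * d))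
     + u.2.sum (fun p c => v.2.sum fun q d =>
         Finsupp.single (p + q + 1) (((p : ℚ) - (q : ℚ)) / 2 * (c * d))),
   (1/2 : ℚ) •
     (u.1.sum (fun n c => v.2.sum fun q d => Finsupp.single (n + q) (c * d))
       + v.1.sum (fun n c => u.2.sum fun q d => Finsupp.single (n + q) (c * d))))

abbrev AA : Type := AddMonoidAlgebra ℚ ℤ

noncomputable def DD (f : AA) : AA := f.coeff.sum fun n c => AddMonoidAlgebra.single n ((n : ℚ) * c)

lemma DD_zero : DD 0 = 0 := by simp [DD]

lemma DD_single (p : ℤ) (c : ℚ) :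
    DD (AddMonoidAlgebra.single p c) = AddMonoidAlgebra.single p ((p:ℚ)*c) := by
  rw [DD, AddMonoidAlgebra.coeff_single, Finsupp.sum_single_index]; simp

lemma DD_add (f g : AA) : DD (f+g) = DD f + DD g := by
  rw [DD, AddMonoidAlgebra.coeff_add]
  exact Finsupp.sum_add_index' (by simp) (by intros; rw [mul_add, AddMonoidAlgebra.single_add])

lemma DD_smul (c : ℚ) (f : AA) : DD (c • f) = c • DD f := by
  rw [DD, AddMonoidAlgebra.coeff_smul, Finsupp.sum_smul_index (by simp), DD, Finsupp.smul_sum]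
  apply Finsupp.sum_congr; intros; rw [AddMonoidAlgebra.smul_single, smul_eq_mul]; congr 1; ring

lemma convo (f g : AA) :
    (Finsupp.sum f.coeff fun n c => Finsupp.sum g.coeff fun m d => Finsupp.single (n+m) (c*d))
      = (f * g).coeff := by
  rw [AddMonoidAlgebra.mul_def, AddMonoidAlgebra.coeff_finsuppSum]
  simp only [AddMonoidAlgebra.coeff_finsuppSum, AddMonoidAlgebra.coeff_single]

lemma DD_mul (f g : AA) : DD (f * g) = DD f * g + f * DD g := by
  induction f using AddMonoidAlgebra.induction_linear with
  | zero => simp [DD_zero]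
  | add f1 f2 h1 h2 => rw [add_mul, DD_add, h1, h2, DD_add, add_mul]; ring
  | single p c =>
    induction g using AddMonoidAlgebra.induction_linear with
    | zero => simp [DD_zero]
    | add g1 g2 h1 h2 => rw [mul_add, DD_add, h1, h2, DD_add, mul_add]; ring
    | single q d =>
      rw [AddMonoidAlgebra.single_mul_single, DD_single, DD_single, DD_single,
        AddMonoidAlgebra.single_mul_single, AddMonoidAlgebra.single_mul_single,
        ← AddMonoidAlgebra.single_add]
      congr 1; push_cast; ring

lemma smulC (c : ℚ) (f : AA) : c • f = AddMonoidAlgebra.single (0:ℤ) c * f := by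
  rw [show AddMonoidAlgebra.single (0:ℤ) c = algebraMap ℚ AA c by simp, ← Algebra.smul_def]

lemma half_add (S u1 u2 v1 v2 g Dg : AA) :
    (1/2:ℚ) • (S * (u1*g - v1*Dg)) + (1/2:ℚ) • (S * (u2*g - v2*Dg))
      = (1/2:ℚ) • (S * ((u1+u2)*g - (v1+v2)*Dg)) := by
  rw [← smul_add]; congr 1; ring

lemma half_add' (S u v g1 g2 D1 D2 : AA) :
    (1/2:ℚ) • (S * (u*g1 - v*D1)) + (1/2:ℚ) • (S * (u*g2 - v*D2))
      = (1/2:ℚ) • (S * (u*(g1+g2) - v*(D1+D2))) := by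
  rw [← smul_add]; congr 1; ring

lemma key (f g : AA) :
    (Finsupp.sum f.coeff fun p c => Finsupp.sum g.coeff fun q d =>
        Finsupp.single (p + q + 1) (((p : ℚ) - (q : ℚ)) / 2 * (c * d)))
    = ((1/2 : ℚ) • (AddMonoidAlgebra.single (1:ℤ) (1:ℚ) * (DD f * g - f * DD g))).coeff := by
  induction f using AddMonoidAlgebra.induction_linear with
  | zero => simp [DD_zero]
  | add f1 f2 h1 h2 =>
    rw [AddMonoidAlgebra.coeff_add, Finsupp.sum_add_index' (fun p => by simp)
        (fun p b1 b2 => by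
          rw [← Finsupp.sum_add]
          apply Finsupp.sum_congr; intro q _
          rw [← Finsupp.single_add]; congr 1; ring),
      h1, h2, DD_add]
    exact congrArg AddMonoidAlgebra.coeff (half_add _ (DD f1) (DD f2) f1 f2 g (DD g))
  | single p c =>
    rw [AddMonoidAlgebra.coeff_single, Finsupp.sum_single_index (by simp)]
    induction g using AddMonoidAlgebra.induction_linear with
    | zero => simp [DD_zero]
    | add g1 g2 h1 h2 =>
      rw [AddMonoidAlgebra.coeff_add, Finsupp.sum_add_index' (fun q => by simp)
          (fun q d1 d2 => by rw [← Finsupp.single_add]; congr 1; ring),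
        h1, h2, DD_add]
      exact congrArg AddMonoidAlgebra.coeff
        (half_add' _ (DD (AddMonoidAlgebra.single p c)) (AddMonoidAlgebra.single p c)
          g1 g2 (DD g1) (DD g2))
    | single q d =>
      rw [AddMonoidAlgebra.coeff_single, Finsupp.sum_single_index (by simp), DD_single, DD_single,
        AddMonoidAlgebra.single_mul_single, AddMonoidAlgebra.single_mul_single,
        ← AddMonoidAlgebra.single_sub, AddMonoidAlgebra.single_mul_single,
        AddMonoidAlgebra.smul_single, AddMonoidAlgebra.coeff_single]
      rw [show (1:ℤ) + (p + q) = p + q + 1 by ring]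
      congr 1; rw [smul_eq_mul]; ring

lemma fsum_zero (f : ℤ →₀ ℚ) : (f.sum fun _ _ => (0 : ℤ →₀ ℚ)) = 0 := by
  simp [Finsupp.sum]

noncomputable abbrev SS : AA := AddMonoidAlgebra.single (1:ℤ) (1:ℚ)

lemma mul_ee (f g : AA) : ak1mul (f.coeff, 0) (g.coeff, 0) = ((f * g).coeff, 0) := by
  unfold ak1mul
  simp only [Finsupp.sum_zero_index, fsum_zero, add_zero, zero_add, smul_zero]
  exact Prod.ext (convo f g) rfl

lemma mul_eo (f b : AA) : ak1mul (f.coeff, 0) (0, b.coeff) = (0, ((1/2:ℚ) • (f * b)).coeff) := by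
  unfold ak1mul
  simp only [Finsupp.sum_zero_index, fsum_zero, add_zero, zero_add, smul_zero]
  exact Prod.ext rfl (congrArg (fun t => (1/2:ℚ) • t) (convo f b))

lemma mul_oe (b f : AA) : ak1mul (0, b.coeff) (f.coeff, 0) = (0, ((1/2:ℚ) • (f * b)).coeff) := by
  unfold ak1mul
  simp only [Finsupp.sum_zero_index, fsum_zero, add_zero, zero_add, smul_zero]
  exact Prod.ext rfl (congrArg (fun t => (1/2:ℚ) • t) (convo f b))

lemma mul_oo (a b : AA) :
    ak1mul (0, a.coeff) (0, b.coeff) = (((1/2:ℚ) • (SS * (DD a * b - a * DD b))).coeff, 0) := by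
  unfold ak1mul
  simp only [Finsupp.sum_zero_index, fsum_zero, add_zero, zero_add, smul_zero]
  exact Prod.ext (key a b) rfl

lemma aux3 (a b : AA) : (1/2:ℚ) • (SS * (DD a * b - a * DD b))
    = -((1/2:ℚ) • (SS * (DD b * a - b * DD a))) := by
  simp only [smulC]; ring

lemma aux8 (f g y : AA) : (1/2:ℚ) • (f * ((1/2:ℚ) • (g * y)))
    = (1/2:ℚ) • ((1/2:ℚ) • (f * g * y)) := by
  simp only [smulC]; ring

lemma hhalf : AddMonoidAlgebra.single (0:ℤ) (1/2:ℚ) * AddMonoidAlgebra.single (0:ℤ) (1/2:ℚ) * 2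
    = AddMonoidAlgebra.single (0:ℤ) (1/2:ℚ) := by
  have h2 : (2:AA) = AddMonoidAlgebra.single (0:ℤ) (2:ℚ) :=
    (map_ofNat (algebraMap ℚ AA) 2).symm
  rw [AddMonoidAlgebra.single_mul_single, h2, AddMonoidAlgebra.single_mul_single]
  norm_num

lemma aux9 (f a b : AA) :
    f * ((1/2:ℚ) • (SS * (DD a * b - a * DD b)))
      = (1/2:ℚ) • (SS * ((1/2:ℚ) • (DD f * a + f * DD a) * b
          - (1/2:ℚ) • (f * a) * DD b))
        + (1/2:ℚ) • (SS * (DD a * ((1/2:ℚ) • (f * b))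
          - a * ((1/2:ℚ) • (DD f * b + f * DD b)))) := by
  simp only [smulC]
  linear_combination (-(SS * f * (DD a * b - a * DD b))) * hhalf

lemma aux10 (a b c : AA) :
    (1/2:ℚ) • ((1/2:ℚ) • (SS * (DD b * c - b * DD c)) * a)
      + (1/2:ℚ) • ((1/2:ℚ) • (SS * (DD c * a - c * DD a)) * b)
      + (1/2:ℚ) • ((1/2:ℚ) • (SS * (DD a * b - a * DD b)) * c) = 0 := by
  simp only [smulC]; ring

/-- The conformal Lie antialgebra `AK(1)` is a Lie antialgebra: with even
part `{u | u.2 = 0}` and odd part `{u | u.1 = 0}`, its product satisfies supercommutativity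
and the axioms (LA0)–(LA3). -/
theorem ak1_is_lie_antialgebra :
    -- supercommutativity
    (∀ u v : AK1, u.2 = 0 → v.2 = 0 → ak1mul u v = ak1mul v u) ∧
    (∀ u v : AK1, u.2 = 0 → v.1 = 0 → ak1mul u v = ak1mul v u) ∧
    (∀ u v : AK1, u.1 = 0 → v.1 = 0 → ak1mul u v = - ak1mul v u) ∧
    -- grading
    (∀ u v : AK1, u.2 = 0 → v.2 = 0 → (ak1mul u v).2 = 0) ∧
    (∀ u v : AK1, u.2 = 0 → v.1 = 0 → (ak1mul u v).1 = 0) ∧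
    (∀ u v : AK1, u.1 = 0 → v.1 = 0 → (ak1mul u v).2 = 0) ∧
    -- (LA0) associativity of the even part
    (∀ x y z : AK1, x.2 = 0 → y.2 = 0 → z.2 = 0 →
      ak1mul x (ak1mul y z) = ak1mul (ak1mul x y) z) ∧
    -- (LA1) half-action
    (∀ x1 x2 y : AK1, x1.2 = 0 → x2.2 = 0 → y.1 = 0 →
      ak1mul x1 (ak1mul x2 y) = (1/2 : ℚ) • ak1mul (ak1mul x1 x2) y) ∧
    -- (LA2) Leibniz identity
    (∀ x y1 y2 : AK1, x.2 = 0 → y1.1 = 0 → y2.1 = 0 →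
      ak1mul x (ak1mul y1 y2) = ak1mul (ak1mul x y1) y2 + ak1mul y1 (ak1mul x y2)) ∧
    -- (LA3) odd Jacobi identity
    (∀ y1 y2 y3 : AK1, y1.1 = 0 → y2.1 = 0 → y3.1 = 0 →
      ak1mul y1 (ak1mul y2 y3) + ak1mul y2 (ak1mul y3 y1)
        + ak1mul y3 (ak1mul y1 y2) = 0) := by
  refine ⟨?_, ?_, ?_, ?_, ?_, ?_, ?_, ?_, ?_, ?_⟩
  · intro u v h1 h2
    rw [show u = ((AddMonoidAlgebra.ofCoeff u.1 : AA).coeff, 0) from Prod.ext rfl h1, show v = ((AddMonoidAlgebra.ofCoeff v.1 : AA).coeff, 0) from Prod.ext rfl h2,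
      mul_ee, mul_ee, mul_comm]
  · intro u v h1 h2
    rw [show u = ((AddMonoidAlgebra.ofCoeff u.1 : AA).coeff, 0) from Prod.ext rfl h1, show v = (0, (AddMonoidAlgebra.ofCoeff v.2 : AA).coeff) from Prod.ext h2 rfl,
      mul_eo, mul_oe]
  · intro u v h1 h2
    rw [show u = (0, (AddMonoidAlgebra.ofCoeff u.2 : AA).coeff) from Prod.ext h1 rfl, show v = (0, (AddMonoidAlgebra.ofCoeff v.2 : AA).coeff) from Prod.ext h2 rfl,
      mul_oo, mul_oo]
    rw [Prod.neg_mk]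
    refine Prod.ext ?_ ?_
    · exact congrArg AddMonoidAlgebra.coeff (aux3 (AddMonoidAlgebra.ofCoeff u.2) (AddMonoidAlgebra.ofCoeff v.2))
    · exact (neg_zero (G := ℤ →₀ ℚ)).symm
  · intro u v h1 h2
    rw [show u = ((AddMonoidAlgebra.ofCoeff u.1 : AA).coeff, 0) from Prod.ext rfl h1, show v = ((AddMonoidAlgebra.ofCoeff v.1 : AA).coeff, 0) from Prod.ext rfl h2, mul_ee]
  · intro u v h1 h2
    rw [show u = ((AddMonoidAlgebra.ofCoeff u.1 : AA).coeff, 0) from Prod.ext rfl h1, show v = (0, (AddMonoidAlgebra.ofCoeff v.2 : AA).coeff) from Prod.ext h2 rfl, mul_eo]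
  · intro u v h1 h2
    rw [show u = (0, (AddMonoidAlgebra.ofCoeff u.2 : AA).coeff) from Prod.ext h1 rfl, show v = (0, (AddMonoidAlgebra.ofCoeff v.2 : AA).coeff) from Prod.ext h2 rfl, mul_oo]
  · intro x y z h1 h2 h3
    rw [show x = ((AddMonoidAlgebra.ofCoeff x.1 : AA).coeff, 0) from Prod.ext rfl h1, show y = ((AddMonoidAlgebra.ofCoeff y.1 : AA).coeff, 0) from Prod.ext rfl h2,
      show z = ((AddMonoidAlgebra.ofCoeff z.1 : AA).coeff, 0) from Prod.ext rfl h3, mul_ee, mul_ee, mul_ee, mul_ee, mul_assoc]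
  · intro x1 x2 y h1 h2 h3
    rw [show x1 = ((AddMonoidAlgebra.ofCoeff x1.1 : AA).coeff, 0) from Prod.ext rfl h1, show x2 = ((AddMonoidAlgebra.ofCoeff x2.1 : AA).coeff, 0) from Prod.ext rfl h2,
      show y = (0, (AddMonoidAlgebra.ofCoeff y.2 : AA).coeff) from Prod.ext h3 rfl, mul_eo, mul_eo, mul_ee, mul_eo]
    rw [Prod.smul_mk]
    refine Prod.ext ?_ ?_
    · exact (smul_zero (1/2:ℚ) (A := ℤ →₀ ℚ)).symm
    · exact congrArg AddMonoidAlgebra.coeff (aux8 (AddMonoidAlgebra.ofCoeff x1.1) (AddMonoidAlgebra.ofCoeff x2.1) (AddMonoidAlgebra.ofCoeff y.2))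
  · intro x y1 y2 h1 h2 h3
    rw [show x = ((AddMonoidAlgebra.ofCoeff x.1 : AA).coeff, 0) from Prod.ext rfl h1, show y1 = (0, (AddMonoidAlgebra.ofCoeff y1.2 : AA).coeff) from Prod.ext h2 rfl,
      show y2 = (0, (AddMonoidAlgebra.ofCoeff y2.2 : AA).coeff) from Prod.ext h3 rfl, mul_oo, mul_ee, mul_eo, mul_oo, mul_eo, mul_oo]
    rw [Prod.mk_add_mk]
    refine Prod.ext ?_ ?_
    · simp only [DD_smul, DD_mul]
      exact congrArg AddMonoidAlgebra.coeff (aux9 (AddMonoidAlgebra.ofCoeff x.1) (AddMonoidAlgebra.ofCoeff y1.2) (AddMonoidAlgebra.ofCoeff y2.2))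
    · exact (add_zero (0 : ℤ →₀ ℚ)).symm
  · intro y1 y2 y3 h1 h2 h3
    rw [show y1 = (0, (AddMonoidAlgebra.ofCoeff y1.2 : AA).coeff) from Prod.ext h1 rfl, show y2 = (0, (AddMonoidAlgebra.ofCoeff y2.2 : AA).coeff) from Prod.ext h2 rfl,
      show y3 = (0, (AddMonoidAlgebra.ofCoeff y3.2 : AA).coeff) from Prod.ext h3 rfl, mul_oo, mul_oo, mul_oo, mul_oe, mul_oe, mul_oe]
    rw [Prod.mk_add_mk, Prod.mk_add_mk]
    refine Prod.ext ?_ ?_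
    · exact show (0:ℤ →₀ ℚ) + 0 + 0 = 0 by simp
    · exact congrArg AddMonoidAlgebra.coeff (aux10 (AddMonoidAlgebra.ofCoeff y1.2) (AddMonoidAlgebra.ofCoeff y2.2) (AddMonoidAlgebra.ofCoeff y3.2))
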